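/- Let n ≥ 2 be an integer and define Δ(n) = |[n]₃| − ⌈log₃((n+1)(n+2)/2)⌉. Then: (i) Δ(n) = 0 for all 2 ≤ n ≤ 8; (ii) for n ≥ 9, Δ(n) = 0 if n ∈ [b_{2r}, 2·3^r) ∪ [b_{2r+1}, 3^{r+1}) for some r ∈ ℕ, and Δ(n) = 1 otherwise. -/

import Mathlib

/-- `[n]₃ = { j·3^k : j ∈ {1,2}, k ∈ ℕ, j·3^k ≤ n }`. -/
def bracket3 (n : ℕ) : Set ℕ :=
  {m | ∃ j ∈ ({1, 2} : Set ℕ), ∃ k : ℕ, m = j * 3 ^ k ∧ m ≤ n}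

/-- `b r = (-3 + √(8·3^r + 1))/2`. -/
noncomputable def b (r : ℕ) : ℝ := (-3 + Real.sqrt (8 * 3 ^ r + 1)) / 2

/-- `Δ n = #[n]₃ − ⌈log₃((n+1)(n+2)/2)⌉`. -/
noncomputable def Δ (n : ℕ) : ℤ :=
  ((bracket3 n).ncard : ℤ) - ⌈Real.logb 3 (((n : ℝ) + 1) * ((n : ℝ) + 2) / 2)⌉


lemma clog3_eq {T a : ℕ} (ha : 1 ≤ a) (h1 : T ≤ 3 ^ a) (h2 : 3 ^ (a - 1) < T) :
    Nat.clog 3 T = a := by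
  have hu : Nat.clog 3 T ≤ a := (Nat.clog_le_iff_le_pow (by norm_num)).mpr h1
  have hl : ¬ Nat.clog 3 T ≤ a - 1 := fun h =>
    absurd ((Nat.clog_le_iff_le_pow (by norm_num)).mp h) (by omega)
  omega

lemma T_mul (n : ℕ) : (n + 1) * (n + 2) / 2 * 2 = (n + 1) * (n + 2) :=
  Nat.div_mul_cancel ((Nat.even_mul_succ_self (n + 1)).two_dvd)

lemma b_le_iff (r n : ℕ) : b r ≤ (n : ℝ) ↔ 2 * 3 ^ r ≤ (n + 1) * (n + 2) := by
  have key : b r ≤ (n : ℝ) ↔ (2 * (3:ℝ) ^ r ≤ ((n:ℝ) + 1) * ((n:ℝ) + 2)) := by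
    unfold b
    rw [div_le_iff₀ (by norm_num : (0:ℝ) < 2)]
    constructor
    · intro h
      have h2 : Real.sqrt (8 * 3 ^ r + 1) ≤ 2 * (n:ℝ) + 3 := by linarith
      have h3 := (Real.sqrt_le_iff.mp h2).2
      nlinarith
    · intro h
      have h2 : Real.sqrt (8 * 3 ^ r + 1) ≤ 2 * (n:ℝ) + 3 :=
        Real.sqrt_le_iff.mpr ⟨by positivity, by nlinarith⟩
      linarith
  rw [key]
  constructor <;> intro h <;> exact_mod_cast h

lemma T_ne_pow (n m : ℕ) (hn : 2 ≤ n) : (n + 1) * (n + 2) ≠ 2 * 3 ^ m := by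
  intro h
  by_cases h3 : 3 ∣ (n + 1)
  · have h3' : ¬ 3 ∣ (n + 2) := by omega
    have hc : Nat.Coprime (n + 2) 3 :=
      Nat.coprime_comm.mp ((Nat.Prime.coprime_iff_not_dvd Nat.prime_three).mpr h3')
    have hcp : Nat.Coprime (n + 2) (3 ^ m) := hc.pow_right m
    have hd : (n + 2) ∣ 2 * 3 ^ m := h ▸ Dvd.intro_left (n + 1) rfl
    have := Nat.le_of_dvd (by norm_num) (hcp.dvd_of_dvd_mul_right hd)
    omega
  · have hc : Nat.Coprime (n + 1) 3 :=
      Nat.coprime_comm.mp ((Nat.Prime.coprime_iff_not_dvd Nat.prime_three).mpr h3)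
    have hcp : Nat.Coprime (n + 1) (3 ^ m) := hc.pow_right m
    have hd : (n + 1) ∣ 2 * 3 ^ m := h ▸ Dvd.intro (n + 2) rfl
    have := Nat.le_of_dvd (by norm_num) (hcp.dvd_of_dvd_mul_right hd)
    omega

lemma bracket3_ncard (n : ℕ) (hn : 2 ≤ n) :
    (bracket3 n).ncard = Nat.log 3 n + Nat.log 3 (n / 2) + 2 := by
  classical
  set s := Nat.log 3 n with hs
  set t := Nat.log 3 (n / 2) with ht
  have hinj1 : Function.Injective (fun k : ℕ => 3 ^ k) :=
    Nat.pow_right_injective (by norm_num)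
  have hinj2 : Function.Injective (fun k : ℕ => 2 * 3 ^ k) := by
    intro a c h
    exact hinj1 (Nat.eq_of_mul_eq_mul_left (by norm_num) h)
  have hset : bracket3 n =
      ↑(((Finset.range (s + 1)).image (fun k => 3 ^ k)) ∪
        ((Finset.range (t + 1)).image (fun k => 2 * 3 ^ k))) := by
    ext m
    simp only [bracket3, Set.mem_setOf_eq, Finset.coe_union, Set.mem_union, Finset.coe_image,
      Set.mem_image, Finset.mem_coe, Finset.mem_range, Set.mem_insert_iff,
      Set.mem_singleton_iff]
    constructor
    · rintro ⟨j, hj, k, rfl, hle⟩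
      rcases hj with rfl | rfl
      · left
        refine ⟨k, ?_, by ring⟩
        have h1 : 3 ^ k ≤ n := by simpa using hle
        have := (Nat.le_log_iff_pow_le (by norm_num) (by omega)).mpr h1
        omega
      · right
        refine ⟨k, ?_, rfl⟩
        have h1 : 3 ^ k ≤ n / 2 := by omega
        have := (Nat.le_log_iff_pow_le (by norm_num) (by omega : n / 2 ≠ 0)).mpr h1
        omega
    · rintro (⟨k, hk, rfl⟩ | ⟨k, hk, rfl⟩)
      · refine ⟨1, Or.inl rfl, k, by ring, ?_⟩
        calc 3 ^ k ≤ 3 ^ s := Nat.pow_le_pow_right (by norm_num) (by omega)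
          _ ≤ n := Nat.pow_log_le_self 3 (by omega)
      · refine ⟨2, Or.inr rfl, k, rfl, ?_⟩
        have h1 : 3 ^ k ≤ n / 2 :=
          le_trans (Nat.pow_le_pow_right (by norm_num) (by omega))
            (Nat.pow_log_le_self 3 (by omega : n / 2 ≠ 0))
        omega
  rw [hset, Set.ncard_coe_finset]
  have hdisj : Disjoint ((Finset.range (s + 1)).image (fun k => 3 ^ k))
      ((Finset.range (t + 1)).image (fun k => 2 * 3 ^ k)) := by
    rw [Finset.disjoint_left]
    rintro m hm1 hm2
    simp only [Finset.mem_image, Finset.mem_range] at hm1 hm2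
    obtain ⟨a, _, ha⟩ := hm1
    obtain ⟨c, _, hc⟩ := hm2
    have h1 : 3 ^ a % 2 = 1 := by
      rw [Nat.pow_mod]; norm_num
    omega
  rw [Finset.card_union_of_disjoint hdisj,
    Finset.card_image_of_injective _ hinj1, Finset.card_image_of_injective _ hinj2,
    Finset.card_range, Finset.card_range]
  omega

lemma delta_formula (n : ℕ) (hn : 2 ≤ n) :
    Δ n = (Nat.log 3 n : ℤ) + Nat.log 3 (n / 2) + 2 - Nat.clog 3 ((n + 1) * (n + 2) / 2) := by
  unfold Δ
  rw [bracket3_ncard n hn]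
  have hcast : ((n:ℝ) + 1) * ((n:ℝ) + 2) / 2 = (((n + 1) * (n + 2) / 2 : ℕ) : ℝ) := by
    have h2 : ((n + 1) * (n + 2) / 2 : ℕ) * 2 = (n + 1) * (n + 2) := T_mul n
    have : (((n + 1) * (n + 2) / 2 : ℕ) : ℝ) * 2 = ((n:ℝ) + 1) * ((n:ℝ) + 2) := by
      exact_mod_cast congrArg (fun x : ℕ => (x : ℝ)) h2
    linarith
  rw [hcast, show (3:ℝ) = ((3:ℕ):ℝ) by norm_num, Real.ceil_logb_natCast (by positivity),
    Int.clog_natCast]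
  push_cast
  ring

lemma main_class (n : ℕ) (hn : 9 ≤ n) :
    (Δ n = 0 ∨ Δ n = 1) ∧
    (Δ n = 0 ↔ ∃ r : ℕ, 1 ≤ r ∧
        ((b (2 * r) ≤ (n : ℝ) ∧ (n : ℝ) < 2 * 3 ^ r) ∨
         (b (2 * r + 1) ≤ (n : ℝ) ∧ (n : ℝ) < 3 ^ (r + 1)))) := by
  have hn2 : 2 ≤ n := by omega
  set s := Nat.log 3 n with hs
  have h3s : 3 ^ s ≤ n := Nat.pow_log_le_self 3 (by omega)
  have h3s' : n < 3 ^ (s + 1) := Nat.lt_pow_succ_log_self (by norm_num) n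
  have hsge : 2 ≤ s := by
    by_contra h
    have h1 : s + 1 ≤ 2 := by omega
    have h2 : 3 ^ (s + 1) ≤ 3 ^ 2 := Nat.pow_le_pow_right (by norm_num) h1
    norm_num at h2
    omega
  have hdf := delta_formula n hn2
  set T := (n + 1) * (n + 2) / 2 with hTdef
  have hT2 : T * 2 = (n + 1) * (n + 2) := T_mul n
  have hPs : 3 ^ (s + 1) = 3 * 3 ^ s := by rw [pow_succ]; ring
  have hP9 : 9 ≤ 3 ^ s := by
    calc (9 : ℕ) = 3 ^ 2 := by norm_num
    _ ≤ 3 ^ s := Nat.pow_le_pow_right (by norm_num) hsge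
  have hQ2 : 3 ^ (2 * s) = 3 ^ s * 3 ^ s := by rw [two_mul, pow_add]
  have hQ21 : 3 ^ (2 * s + 1) = 3 * (3 ^ s * 3 ^ s) := by rw [pow_succ, hQ2]; ring
  have hQ22 : 3 ^ (2 * s + 2) = 9 * (3 ^ s * 3 ^ s) := by
    rw [show 2 * s + 2 = (2 * s + 1) + 1 by rfl, pow_succ, hQ21]; ring
  -- a reusable fact: in the left branch, r must equal s
  have left_loc : ∀ r : ℕ, 1 ≤ r → b (2 * r) ≤ (n : ℝ) → (n : ℝ) < 2 * 3 ^ r →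
      r = s ∧ 3 ^ (2 * s) < T ∧ n < 2 * 3 ^ s := by
    intro r hr1 hbr hlt
    have hbn : 2 * 3 ^ (2 * r) ≤ (n + 1) * (n + 2) := (b_le_iff (2 * r) n).mp hbr
    have hne := T_ne_pow n (2 * r) hn2
    have hTgt : 3 ^ (2 * r) < T := by omega
    have hltn : n < 2 * 3 ^ r := by exact_mod_cast hlt
    have hpow : 3 ^ (2 * r) = 3 ^ r * 3 ^ r := by rw [two_mul, pow_add]
    have hQ3 : 3 ≤ 3 ^ r := by
      calc (3 : ℕ) = 3 ^ 1 := by norm_num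
      _ ≤ 3 ^ r := Nat.pow_le_pow_right (by norm_num) hr1
    have hge : 3 ^ r ≤ n := by
      by_contra hcon
      push_neg at hcon
      have hmono : (n + 1) * (n + 2) ≤ 3 ^ r * (3 ^ r + 1) :=
        Nat.mul_le_mul (by omega) (by omega)
      have key : 2 * (3 ^ r * 3 ^ r) ≤ 3 ^ r * (3 ^ r + 1) := by
        calc 2 * (3 ^ r * 3 ^ r) = 2 * 3 ^ (2 * r) := by rw [hpow]
          _ ≤ (n + 1) * (n + 2) := hbn
          _ ≤ _ := hmono
      have hexp : 3 ^ r * (3 ^ r + 1) = 3 ^ r * 3 ^ r + 3 ^ r := by ring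
      have hmul : 3 * 3 ^ r ≤ 3 ^ r * 3 ^ r := Nat.mul_le_mul hQ3 le_rfl
      omega
    have hlt3 : n < 3 ^ (r + 1) := by
      have : 3 ^ (r + 1) = 3 * 3 ^ r := by rw [pow_succ]; ring
      omega
    have hrs : r = s := by
      have := Nat.log_eq_of_pow_le_of_lt_pow hge hlt3
      omega
    subst hrs
    exact ⟨rfl, hTgt, hltn⟩
  have right_loc : ∀ r : ℕ, 1 ≤ r → b (2 * r + 1) ≤ (n : ℝ) → (n : ℝ) < 3 ^ (r + 1) →
      r = s ∧ 3 ^ (2 * s + 1) < T ∧ 2 * 3 ^ s ≤ n := by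
    intro r hr1 hbr hlt
    have hbn : 2 * 3 ^ (2 * r + 1) ≤ (n + 1) * (n + 2) := (b_le_iff (2 * r + 1) n).mp hbr
    have hne := T_ne_pow n (2 * r + 1) hn2
    have hTgt : 3 ^ (2 * r + 1) < T := by omega
    have hltn : n < 3 ^ (r + 1) := by exact_mod_cast hlt
    have hpow : 3 ^ (2 * r + 1) = 3 * (3 ^ r * 3 ^ r) := by
      rw [pow_succ, two_mul, pow_add]; ring
    have hQ3 : 3 ≤ 3 ^ r := by
      calc (3 : ℕ) = 3 ^ 1 := by norm_num
      _ ≤ 3 ^ r := Nat.pow_le_pow_right (by norm_num) hr1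
    have hge : 2 * 3 ^ r ≤ n := by
      by_contra hcon
      push_neg at hcon
      have hmono : (n + 1) * (n + 2) ≤ (2 * 3 ^ r) * (2 * 3 ^ r + 1) :=
        Nat.mul_le_mul (by omega) (by omega)
      have key : 2 * (3 * (3 ^ r * 3 ^ r)) ≤ (2 * 3 ^ r) * (2 * 3 ^ r + 1) := by
        calc 2 * (3 * (3 ^ r * 3 ^ r)) = 2 * 3 ^ (2 * r + 1) := by rw [hpow]
          _ ≤ (n + 1) * (n + 2) := hbn
          _ ≤ _ := hmono
      have hexp : (2 * 3 ^ r) * (2 * 3 ^ r + 1) = 4 * (3 ^ r * 3 ^ r) + 2 * 3 ^ r := by ring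
      have hmul : 3 * 3 ^ r ≤ 3 ^ r * 3 ^ r := Nat.mul_le_mul hQ3 le_rfl
      omega
    have hge1 : 3 ^ r ≤ n := by omega
    have hrs : r = s := by
      have := Nat.log_eq_of_pow_le_of_lt_pow hge1 hltn
      omega
    subst hrs
    exact ⟨rfl, hTgt, hge⟩
  by_cases hcase : n < 2 * 3 ^ s
  · -- Case A : 3^s ≤ n < 2·3^s
    have ht : Nat.log 3 (n / 2) = s - 1 := by
      have hs1 : 3 * 3 ^ (s - 1) = 3 ^ s := by
        rw [← pow_succ']
        congr 1
        omega
      apply Nat.log_eq_of_pow_le_of_lt_pow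
      · omega
      · rw [show s - 1 + 1 = s by omega]
        omega
    have hub : T ≤ 3 ^ (2 * s + 1) := by
      have h1 : (n + 1) * (n + 2) ≤ (2 * 3 ^ s) * (2 * 3 ^ s + 1) :=
        Nat.mul_le_mul (by omega) (by omega)
      have h2 : (2 * 3 ^ s) * (2 * 3 ^ s + 1) ≤ 2 * 3 ^ (2 * s + 1) := by
        rw [hQ21]
        have hexp : (2 * 3 ^ s) * (2 * 3 ^ s + 1) = 4 * (3 ^ s * 3 ^ s) + 2 * 3 ^ s := by ring
        have hmul : 9 * 3 ^ s ≤ 3 ^ s * 3 ^ s := Nat.mul_le_mul hP9 le_rfl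
        omega
      omega
    have hlb : 3 ^ (2 * s - 1) < T := by
      have h2s1 : 3 * 3 ^ (2 * s - 1) = 3 ^ (2 * s) := by
        rw [← pow_succ']
        congr 1
        omega
      have hmono : (3 ^ s + 1) * (3 ^ s + 2) ≤ (n + 1) * (n + 2) :=
        Nat.mul_le_mul (by omega) (by omega)
      have hX : 1 ≤ 3 ^ (2 * s - 1) := Nat.one_le_pow _ _ (by norm_num)
      have h2 : 3 ^ s * 3 ^ s ≤ (3 ^ s + 1) * (3 ^ s + 2) := by
        have hexp : (3 ^ s + 1) * (3 ^ s + 2) = 3 ^ s * 3 ^ s + 3 * 3 ^ s + 2 := by ring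
        omega
      have h3 : 3 ^ (2 * s) ≤ (n + 1) * (n + 2) := by
        rw [hQ2]; omega
      omega
    have hcond_iff : (∃ r : ℕ, 1 ≤ r ∧
        ((b (2 * r) ≤ (n : ℝ) ∧ (n : ℝ) < 2 * 3 ^ r) ∨
         (b (2 * r + 1) ≤ (n : ℝ) ∧ (n : ℝ) < 3 ^ (r + 1)))) ↔ 3 ^ (2 * s) < T := by
      constructor
      · rintro ⟨r, hr1, (⟨hbr, hlt⟩ | ⟨hbr, hlt⟩)⟩
        · exact (left_loc r hr1 hbr hlt).2.1
        · have := (right_loc r hr1 hbr hlt).2.2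
          omega
      · intro hTgt
        refine ⟨s, by omega, Or.inl ⟨(b_le_iff (2 * s) n).mpr (by omega), ?_⟩⟩
        exact_mod_cast hcase
    by_cases hTle : 3 ^ (2 * s) < T
    · have hclog : Nat.clog 3 T = 2 * s + 1 :=
        clog3_eq (by omega) hub (by simpa using hTle)
      have hΔ : Δ n = 0 := by
        rw [hdf, ht, hclog]
        push_cast [Nat.cast_sub (show 1 ≤ s by omega)]
        ring
      exact ⟨Or.inl hΔ, by rw [hΔ, hcond_iff]; exact ⟨fun _ => hTle, fun _ => rfl⟩⟩
    · have hclog : Nat.clog 3 T = 2 * s := by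
        apply clog3_eq (by omega) (by omega)
        rw [show 2 * s - 1 = 2 * s - 1 from rfl]
        exact hlb
      have hΔ : Δ n = 1 := by
        rw [hdf, ht, hclog]
        push_cast [Nat.cast_sub (show 1 ≤ s by omega)]
        ring
      refine ⟨Or.inr hΔ, ?_⟩
      rw [hΔ, hcond_iff]
      constructor
      · intro h; exact absurd h (by norm_num)
      · intro h; exact absurd h hTle
  · -- Case B : 2·3^s ≤ n < 3^(s+1)
    push_neg at hcase
    have ht : Nat.log 3 (n / 2) = s := by
      apply Nat.log_eq_of_pow_le_of_lt_pow
      · omega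
      · omega
    have hub : T ≤ 3 ^ (2 * s + 2) := by
      have h1 : (n + 1) * (n + 2) ≤ (3 * 3 ^ s) * (3 * 3 ^ s + 1) :=
        Nat.mul_le_mul (by omega) (by omega)
      have h2 : (3 * 3 ^ s) * (3 * 3 ^ s + 1) ≤ 2 * 3 ^ (2 * s + 2) := by
        rw [hQ22]
        have hexp : (3 * 3 ^ s) * (3 * 3 ^ s + 1) = 9 * (3 ^ s * 3 ^ s) + 3 * 3 ^ s := by ring
        have hmul : 9 * 3 ^ s ≤ 3 ^ s * 3 ^ s := Nat.mul_le_mul hP9 le_rfl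
        omega
      omega
    have hlb : 3 ^ (2 * s) < T := by
      have hmono : (2 * 3 ^ s + 1) * (2 * 3 ^ s + 2) ≤ (n + 1) * (n + 2) :=
        Nat.mul_le_mul (by omega) (by omega)
      have h2 : 2 * (3 ^ s * 3 ^ s) < (2 * 3 ^ s + 1) * (2 * 3 ^ s + 2) := by
        have hexp : (2 * 3 ^ s + 1) * (2 * 3 ^ s + 2) = 4 * (3 ^ s * 3 ^ s) + 6 * 3 ^ s + 2 := by
          ring
        omega
      have h3 : 2 * 3 ^ (2 * s) < (n + 1) * (n + 2) := by
        rw [hQ2]; omega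
      omega
    have hcond_iff : (∃ r : ℕ, 1 ≤ r ∧
        ((b (2 * r) ≤ (n : ℝ) ∧ (n : ℝ) < 2 * 3 ^ r) ∨
         (b (2 * r + 1) ≤ (n : ℝ) ∧ (n : ℝ) < 3 ^ (r + 1)))) ↔ 3 ^ (2 * s + 1) < T := by
      constructor
      · rintro ⟨r, hr1, (⟨hbr, hlt⟩ | ⟨hbr, hlt⟩)⟩
        · have := (left_loc r hr1 hbr hlt).2.2
          omega
        · exact (right_loc r hr1 hbr hlt).2.1
      · intro hTgt
        refine ⟨s, by omega, Or.inr ⟨(b_le_iff (2 * s + 1) n).mpr (by omega), ?_⟩⟩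
        exact_mod_cast h3s'
    by_cases hTle : 3 ^ (2 * s + 1) < T
    · have hclog : Nat.clog 3 T = 2 * s + 2 := by
        apply clog3_eq (by omega) hub
        simpa using hTle
      have hΔ : Δ n = 0 := by
        rw [hdf, ht, hclog]
        push_cast
        ring
      exact ⟨Or.inl hΔ, by rw [hΔ, hcond_iff]; exact ⟨fun _ => hTle, fun _ => rfl⟩⟩
    · have hclog : Nat.clog 3 T = 2 * s + 1 := by
        apply clog3_eq (by omega) (by omega)
        simpa using hlb
      have hΔ : Δ n = 1 := by
        rw [hdf, ht, hclog]
        push_cast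
        ring
      refine ⟨Or.inr hΔ, ?_⟩
      rw [hΔ, hcond_iff]
      constructor
      · intro h; exact absurd h (by norm_num)
      · intro h; exact absurd h hTle

lemma delta_eval (n sL tL cL : ℕ) (hn : 2 ≤ n)
    (h1 : Nat.log 3 n = sL) (h2 : Nat.log 3 (n / 2) = tL)
    (h3 : Nat.clog 3 ((n + 1) * (n + 2) / 2) = cL)
    (h : (sL : ℤ) + tL + 2 - cL = 0) : Δ n = 0 := by
  rw [delta_formula n hn, h1, h2, h3]; exact h

theorem stmt_7 :
    (∀ n : ℕ, 2 ≤ n → n ≤ 8 → Δ n = 0) ∧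
    (∀ n : ℕ, 9 ≤ n →
      ((∃ r : ℕ, 1 ≤ r ∧
          ((b (2 * r) ≤ (n : ℝ) ∧ (n : ℝ) < 2 * 3 ^ r) ∨
           (b (2 * r + 1) ≤ (n : ℝ) ∧ (n : ℝ) < 3 ^ (r + 1)))) → Δ n = 0) ∧
      ((¬ ∃ r : ℕ, 1 ≤ r ∧
          ((b (2 * r) ≤ (n : ℝ) ∧ (n : ℝ) < 2 * 3 ^ r) ∨
           (b (2 * r + 1) ≤ (n : ℝ) ∧ (n : ℝ) < 3 ^ (r + 1)))) → Δ n = 1)) := by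
  constructor
  · intro n h2 h8
    interval_cases n
    · exact delta_eval 2 0 0 2 (by norm_num)
        (Nat.log_eq_of_pow_le_of_lt_pow (by norm_num) (by norm_num))
        (Nat.log_eq_of_pow_le_of_lt_pow (by norm_num) (by norm_num))
        (clog3_eq (by norm_num) (by norm_num) (by norm_num)) (by norm_num)
    · exact delta_eval 3 1 0 3 (by norm_num)
        (Nat.log_eq_of_pow_le_of_lt_pow (by norm_num) (by norm_num))
        (Nat.log_eq_of_pow_le_of_lt_pow (by norm_num) (by norm_num))
        (clog3_eq (by norm_num) (by norm_num) (by norm_num)) (by norm_num)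
    · exact delta_eval 4 1 0 3 (by norm_num)
        (Nat.log_eq_of_pow_le_of_lt_pow (by norm_num) (by norm_num))
        (Nat.log_eq_of_pow_le_of_lt_pow (by norm_num) (by norm_num))
        (clog3_eq (by norm_num) (by norm_num) (by norm_num)) (by norm_num)
    · exact delta_eval 5 1 0 3 (by norm_num)
        (Nat.log_eq_of_pow_le_of_lt_pow (by norm_num) (by norm_num))
        (Nat.log_eq_of_pow_le_of_lt_pow (by norm_num) (by norm_num))
        (clog3_eq (by norm_num) (by norm_num) (by norm_num)) (by norm_num)
    · exact delta_eval 6 1 1 4 (by norm_num)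
        (Nat.log_eq_of_pow_le_of_lt_pow (by norm_num) (by norm_num))
        (Nat.log_eq_of_pow_le_of_lt_pow (by norm_num) (by norm_num))
        (clog3_eq (by norm_num) (by norm_num) (by norm_num)) (by norm_num)
    · exact delta_eval 7 1 1 4 (by norm_num)
        (Nat.log_eq_of_pow_le_of_lt_pow (by norm_num) (by norm_num))
        (Nat.log_eq_of_pow_le_of_lt_pow (by norm_num) (by norm_num))
        (clog3_eq (by norm_num) (by norm_num) (by norm_num)) (by norm_num)
    · exact delta_eval 8 1 1 4 (by norm_num)
        (Nat.log_eq_of_pow_le_of_lt_pow (by norm_num) (by norm_num))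
        (Nat.log_eq_of_pow_le_of_lt_pow (by norm_num) (by norm_num))
        (clog3_eq (by norm_num) (by norm_num) (by norm_num)) (by norm_num)
  · intro n h9
    obtain ⟨hd01, hiff⟩ := main_class n h9
    refine ⟨fun h => hiff.mpr h, fun h => ?_⟩
    rcases hd01 with h0 | h1
    · exact absurd (hiff.mp h0) h
    · exact h1
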